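/- For h ∈ ℝ define M_h^* f(x) = sup_{t>0} ∫_{I(h,2)} |f(x−ty)| dy, where I(h,2) = {y ∈ ℝ : |y−h| < 2}. Then for every 1 < p ≤ ∞ there is a constant C, independent of h, such that ‖M_h^* f‖_{L^p(ℝ)} ≤ C (1+|h|)^{1/p} ‖f‖_{L^p(ℝ)} for all f ∈ L^p(ℝ) (with the convention (1+|h|)^{1/∞} = 1). -/

import Mathlib

open MeasureTheory Metric Set
open scoped ENNReal NNReal

noncomputable section

/-- `L^r` quasi-norm (in `ℝ≥0∞`) of an `ℝ≥0∞`-valued function. -/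
def lpNormE {α : Type*} [MeasurableSpace α] (μ : Measure α) (F : α → ℝ≥0∞) (r : ℝ≥0∞) : ℝ≥0∞ :=
  if r = 0 then 0 else if r = ∞ then essSup F μ
  else (∫⁻ x, F x ^ r.toReal ∂μ) ^ (1 / r.toReal)

/-- The maximal operator `M_h^* f(x) = sup_{t>0} ∫_{I(h,2)} |f(x - ty)| dy`,
where `I(h,2) = {y : |y - h| < 2}`. -/
def MhStar (h : ℝ) (f : ℝ → ℝ) (x : ℝ) : ℝ≥0∞ :=
  ⨆ t ∈ Ioi (0 : ℝ), ∫⁻ y in ball h 2, ENNReal.ofReal |f (x - t * y)|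


lemma map_affine (x t : ℝ) (ht : 0 < t) :
    Measure.map (fun y : ℝ => x - t * y) volume = ENNReal.ofReal t⁻¹ • volume := by
  have : (fun y : ℝ => x - t * y) = (fun z : ℝ => x + z) ∘ (fun y : ℝ => (-t) * y) := by
    ext y; simp only [Function.comp_apply]; ring
  rw [this, ← Measure.map_map (by fun_prop) (by fun_prop),
    Real.map_volume_mul_left (by simpa using ht.ne'),
    Measure.map_smul, map_add_left_eq_self]
  congr 1
  rw [abs_inv, abs_neg, abs_of_pos ht]

lemma qmp_affine (x t : ℝ) (ht : 0 < t) :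
    Measure.QuasiMeasurePreserving (fun y : ℝ => x - t * y) volume volume := by
  refine ⟨by fun_prop, ?_⟩
  rw [map_affine x t ht]
  exact Measure.smul_absolutelyContinuous

lemma ae_comp_affine {P : ℝ → Prop} (hP : ∀ᵐ u : ℝ, P u) (x t : ℝ) (ht : 0 < t) :
    ∀ᵐ y : ℝ, P (x - t * y) := by
  have h0 : volume {u : ℝ | ¬ P u} = 0 := hP
  have := (qmp_affine x t ht).preimage_null h0
  exact this

/-- a.e. equal functions have equal maximal functions -/

lemma cov (g : ℝ → ℝ≥0∞) (hg : Measurable g) (h x t : ℝ) (ht : 0 < t) :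
    ∫⁻ y in ball h 2, g (x - t * y) =
      ENNReal.ofReal t⁻¹ * ∫⁻ u in ball (x - t * h) (2 * t), g u := by
  have hφ : Measurable fun y : ℝ => x - t * y := by fun_prop
  have hmap := map_affine x t ht
  have hpre : (fun y : ℝ => x - t * y) ⁻¹' (ball (x - t * h) (2 * t)) = ball h 2 := by
    ext y
    simp only [mem_preimage, mem_ball, Real.dist_eq]
    constructor <;> intro hy
    · have : |x - t * y - (x - t * h)| = t * |y - h| := by
        rw [show x - t * y - (x - t * h) = t * (h - y) by ring, abs_mul, abs_of_pos ht,
          abs_sub_comm]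
      nlinarith [abs_nonneg (y - h)]
    · have : |x - t * y - (x - t * h)| = t * |y - h| := by
        rw [show x - t * y - (x - t * h) = t * (h - y) by ring, abs_mul, abs_of_pos ht,
          abs_sub_comm]
      rw [this]; nlinarith
  rw [← hpre, ← setLIntegral_map measurableSet_ball hg hφ, hmap]
  simp [lintegral_smul_measure]

lemma MhStar_eq {f : ℝ → ℝ} (hf : Measurable f) (h x : ℝ) :
    MhStar h f x = ⨆ t ∈ Ioi (0 : ℝ),
      ENNReal.ofReal t⁻¹ * ∫⁻ u in ball (x - t * h) (2 * t), ENNReal.ofReal |f u| := by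
  unfold MhStar
  refine iSup_congr fun t => iSup_congr fun ht => ?_
  exact cov (fun u => ENNReal.ofReal |f u|) (by fun_prop) h x t ht

lemma exists_ball_lt {g : ℝ → ℝ≥0∞} (hg : Measurable g) {c R : ℝ} {C y : ℝ≥0∞}
    (hy : y < C * ∫⁻ u in ball c R, g u) :
    ∃ r, 0 < r ∧ r < R ∧ y < C * ∫⁻ u in ball c r, g u := by
  have key : ∫⁻ u in ball c R, g u = ⨆ n : ℕ, ∫⁻ u in ball c (R - 1/(n+1)), g u := by
    have h1 : ∀ s : Set ℝ, MeasurableSet s → ∫⁻ u in s, g u = ∫⁻ u, s.indicator g u := by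
      intro s hs; rw [lintegral_indicator hs]
    rw [h1 _ measurableSet_ball]
    have h2 : (fun u => (ball c R).indicator g u)
        = fun u => ⨆ n : ℕ, (ball c (R - 1/(n+1))).indicator g u := by
      ext u
      by_cases hu : u ∈ ball c R
      · rw [indicator_of_mem hu]
        have hlt : dist u c < R := mem_ball.1 hu
        obtain ⟨n, hn⟩ := exists_nat_gt (1 / (R - dist u c))
        have hpos : 0 < R - dist u c := by linarith
        have hn1 : (0:ℝ) < (n:ℝ) + 1 := by positivity
        have hmem : u ∈ ball c (R - 1/(n+1)) := by
          rw [mem_ball]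
          have key2 : 1 < ((n:ℝ)+1) * (R - dist u c) :=
            (div_lt_iff₀ hpos).1 (by linarith)
          have : 1 / ((n:ℝ)+1) < R - dist u c := (div_lt_iff₀ hn1).2 (by nlinarith)
          linarith
        refine le_antisymm (le_iSup_of_le n (by rw [indicator_of_mem hmem])) ?_
        refine iSup_le fun m => ?_
        by_cases hm : u ∈ ball c (R - 1/(m+1))
        · rw [indicator_of_mem hm]
        · rw [indicator_of_notMem hm]; exact zero_le
      · rw [indicator_of_notMem hu]
        refine (ENNReal.iSup_eq_zero.2 fun n => ?_).symm
        have : u ∉ ball c (R - 1/(n+1)) := fun hm => hu (ball_subset_ball (by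
          have : (0:ℝ) < 1/((n:ℝ)+1) := by positivity
          linarith) hm)
        rw [indicator_of_notMem this]
    rw [h2, lintegral_iSup (fun n => hg.indicator measurableSet_ball)
      (fun m n hmn => indicator_le_indicator_of_subset
        (ball_subset_ball (by
          have h1 : ((m:ℝ)+1) ≤ (n:ℝ)+1 := by exact_mod_cast by omega
          have h2 : (0:ℝ) < (m:ℝ)+1 := by positivity
          have := one_div_le_one_div_of_le h2 h1
          linarith)) (fun u => zero_le))]
    exact iSup_congr fun n => (h1 _ measurableSet_ball).symm
  rw [key, ENNReal.mul_iSup] at hy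
  obtain ⟨n, hn⟩ := lt_iSup_iff.1 hy
  refine ⟨R - 1/(n+1), ?_, by
    have : (0:ℝ) < 1/((n:ℝ)+1) := by positivity
    linarith, hn⟩
  by_contra hr
  push_neg at hr
  rw [ball_eq_empty.2 (by linarith)] at hn
  simp at hn

lemma MhStar_lsc {f : ℝ → ℝ} (hf : Measurable f) (h : ℝ) :
    LowerSemicontinuous (MhStar h f) := by
  intro x y hy
  rw [MhStar_eq hf] at hy
  obtain ⟨t, hty⟩ := lt_iSup_iff.1 hy
  obtain ⟨ht, hty⟩ := lt_iSup_iff.1 hty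
  replace ht : (0:ℝ) < t := ht
  obtain ⟨r, hr0, hrR, hry⟩ := exists_ball_lt (by fun_prop) hty
  have hpos : (0:ℝ) < 2 * t - r := by linarith
  filter_upwards [Metric.ball_mem_nhds x hpos] with x' hx'
  rw [MhStar_eq hf]
  refine lt_of_lt_of_le hry (le_iSup_of_le t (le_iSup_of_le (by exact ht) ?_))
  gcongr
  refine ball_subset_ball' ?_
  have : dist (x - t*h) (x' - t*h) = dist x x' := by
    simp [Real.dist_eq]
  rw [this]
  have := mem_ball.1 hx'
  rw [dist_comm] at this
  linarith

lemma MhStar_measurable {f : ℝ → ℝ} (hf : Measurable f) (h : ℝ) :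
    Measurable (MhStar h f) := (MhStar_lsc hf h).measurable

lemma MhStar_congr_ae {f g : ℝ → ℝ} (hfg : f =ᵐ[volume] g) (h : ℝ) :
    MhStar h f = MhStar h g := by
  funext x
  unfold MhStar
  refine iSup_congr fun t => iSup_congr fun ht => ?_
  replace ht : (0:ℝ) < t := ht
  refine lintegral_congr_ae (ae_restrict_of_ae ?_)
  filter_upwards [ae_comp_affine hfg x t ht] with y hy
  rw [hy]

lemma MhStar_le_add {h : ℝ} {f g b : ℝ → ℝ} (hg : Measurable g)
    (hfg : ∀ u, |f u| = |g u| + |b u|) (x : ℝ) :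
    MhStar h f x ≤ MhStar h g x + MhStar h b x := by
  refine iSup₂_le fun t ht => ?_
  have key : ∫⁻ y in ball h 2, ENNReal.ofReal |f (x - t * y)|
      = (∫⁻ y in ball h 2, ENNReal.ofReal |g (x - t * y)|)
        + ∫⁻ y in ball h 2, ENNReal.ofReal |b (x - t * y)| := by
    rw [← lintegral_add_left (by fun_prop)]
    refine lintegral_congr fun y => ?_
    rw [← ENNReal.ofReal_add (abs_nonneg _) (abs_nonneg _), hfg]
  rw [key]
  exact add_le_add (le_iSup₂_of_le t ht le_rfl) (le_iSup₂_of_le t ht le_rfl)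

lemma MhStar_le_const {h : ℝ} {g : ℝ → ℝ} {c : ℝ} (hc : ∀ u, |g u| ≤ c) (x : ℝ) :
    MhStar h g x ≤ ENNReal.ofReal (4 * c) := by
  refine iSup₂_le fun t ht => ?_
  calc ∫⁻ y in ball h 2, ENNReal.ofReal |g (x - t * y)|
      ≤ ∫⁻ _ in ball h 2, ENNReal.ofReal c :=
        lintegral_mono fun y => ENNReal.ofReal_le_ofReal (hc _)
    _ = ENNReal.ofReal c * volume (ball h 2) := setLIntegral_const _ _
    _ = ENNReal.ofReal (4 * c) := by
        rw [Real.volume_ball, ← ENNReal.ofReal_mul (le_trans (abs_nonneg _) (hc 0))]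
        norm_num [mul_comm]

lemma MhStar_le_eLpNormTop (h : ℝ) (f : ℝ → ℝ) (x : ℝ) :
    MhStar h f x ≤ ENNReal.ofReal 4 * eLpNorm f ∞ volume := by
  refine iSup₂_le fun t ht => ?_
  replace ht : (0:ℝ) < t := ht
  set L := eLpNorm f ∞ volume with hL
  have hae : ∀ᵐ u : ℝ, ENNReal.ofReal |f u| ≤ L := by
    rw [hL, eLpNorm_exponent_top]
    filter_upwards [ae_le_eLpNormEssSup (f := f) (μ := volume)] with u hu
    rwa [← Real.enorm_eq_ofReal_abs]
  calc ∫⁻ y in ball h 2, ENNReal.ofReal |f (x - t * y)|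
      ≤ ∫⁻ _ in ball h 2, L := by
        refine lintegral_mono_ae (ae_restrict_of_ae ?_)
        exact ae_comp_affine hae x t ht
    _ = L * volume (ball h 2) := setLIntegral_const _ _
    _ = ENNReal.ofReal 4 * L := by
        rw [Real.volume_ball]; norm_num [mul_comm]

lemma weak_type {f : ℝ → ℝ} (hf : Measurable f) (h : ℝ) {L : ℝ≥0∞} (hL0 : L ≠ 0) (hLt : L ≠ ∞) :
    volume {x | L < MhStar h f x} * L ≤
      ENNReal.ofReal (20 * (1 + |h|)) * ∫⁻ u, ENNReal.ofReal |f u| := by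
  set I := ∫⁻ u, ENNReal.ofReal |f u| with hI_def
  by_cases hI : I = ∞
  · rw [hI, ENNReal.mul_top (by positivity)]
    exact le_top
  set E := {x | L < MhStar h f x} with hE_def
  have hex : ∀ x ∈ E, ∃ t : ℝ, 0 < t ∧
      L * ENNReal.ofReal t < ∫⁻ u in ball (x - t * h) (2 * t), ENNReal.ofReal |f u| := by
    intro x hx
    have hx' : L < MhStar h f x := hx
    rw [MhStar_eq hf] at hx'
    obtain ⟨t, hx'⟩ := lt_iSup_iff.1 hx'
    obtain ⟨ht, hx'⟩ := lt_iSup_iff.1 hx'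
    replace ht : (0:ℝ) < t := ht
    refine ⟨t, ht, ?_⟩
    have h1 : (ENNReal.ofReal t⁻¹ * ∫⁻ u in ball (x - t * h) (2 * t), ENNReal.ofReal |f u|)
        * ENNReal.ofReal t = ∫⁻ u in ball (x - t * h) (2 * t), ENNReal.ofReal |f u| := by
      rw [mul_right_comm, ← ENNReal.ofReal_mul (by positivity), inv_mul_cancel₀ ht.ne',
        ENNReal.ofReal_one, one_mul]
    calc L * ENNReal.ofReal t
        < (ENNReal.ofReal t⁻¹ * ∫⁻ u in ball (x - t * h) (2 * t), ENNReal.ofReal |f u|)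
          * ENNReal.ofReal t := by
          exact (ENNReal.mul_lt_mul_iff_left (by simp [ht]) (by simp)).2 hx'
      _ = _ := h1
  classical
  set tt : ℝ → ℝ := fun x => if hx : x ∈ E then (hex x hx).choose else 1 with htt_def
  have htt : ∀ x ∈ E, 0 < tt x ∧
      L * ENNReal.ofReal (tt x) < ∫⁻ u in ball (x - tt x * h) (2 * tt x), ENNReal.ofReal |f u| := by
    intro x hx
    simp only [htt_def, dif_pos hx]
    exact (hex x hx).choose_spec
  have httR : ∀ x ∈ E, tt x ≤ (I / L).toReal := by
    intro x hx
    have h1 : L * ENNReal.ofReal (tt x) ≤ I :=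
      le_trans (htt x hx).2.le (setLIntegral_le_lintegral _ _)
    rw [mul_comm] at h1
    have h2 : ENNReal.ofReal (tt x) ≤ I / L := ENNReal.le_div_iff_mul_le (Or.inl hL0)
      (Or.inl hLt) |>.2 h1
    exact (ENNReal.ofReal_le_iff_le_toReal (by
      exact (ENNReal.div_lt_top hI hL0).ne)).1 h2 |>.trans le_rfl
  obtain ⟨u, huE, hdisj, hcov⟩ := Vitali.exists_disjoint_subfamily_covering_enlargement_closedBall
    E (fun a => a - tt a * h) (fun a => (2 + |h|) * tt a) ((2 + |h|) * (I / L).toReal)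
    (fun a ha => mul_le_mul_of_nonneg_left (httR a ha) (by positivity)) 4 (by norm_num)
  -- countability of u
  have hucnt : u.Countable := by
    have hpos : ∀ b : ↥u, 0 < volume (closedBall ((b:ℝ) - tt b * h) ((2 + |h|) * tt b)) := by
      intro b
      rw [Real.volume_closedBall]
      have : 0 < tt (b:ℝ) := (htt _ (huE b.2)).1
      have : (0:ℝ) < 2 * ((2 + |h|) * tt (b:ℝ)) := by positivity
      simpa [ENNReal.ofReal_pos] using this
    have hdisj' : Pairwise (Function.onFun Disjoint fun b : ↥u =>
        closedBall ((b:ℝ) - tt b * h) ((2 + |h|) * tt b)) := by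
      intro i j hij
      exact hdisj i.2 j.2 (Subtype.coe_injective.ne hij)
    have := MeasureTheory.Measure.countable_meas_pos_of_disjoint_iUnion₀
      (μ := volume) (As := fun b : ↥u =>
        closedBall ((b:ℝ) - tt b * h) ((2 + |h|) * tt b))
      (fun b => measurableSet_closedBall.nullMeasurableSet)
      (fun i j hij => (hdisj' hij).aedisjoint)
    have huniv : {i : ↥u | 0 < volume (closedBall ((i:ℝ) - tt i * h) ((2 + |h|) * tt i))}
        = univ := eq_univ_of_forall fun b => hpos b
    rw [huniv] at this
    rw [← Set.countable_coe_iff]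
    exact Set.countable_univ_iff.1 this
  have := hucnt.to_subtype
  -- cover
  have hEcov : E ⊆ ⋃ b ∈ u, closedBall ((b:ℝ) - tt b * h) (4 * ((2 + |h|) * tt b)) := by
    intro a ha
    obtain ⟨b, hb, hsub⟩ := hcov a ha
    refine mem_biUnion hb (hsub ?_)
    rw [mem_closedBall, Real.dist_eq]
    have h0 : 0 < tt a := (htt a ha).1
    have : |a - (a - tt a * h)| = tt a * |h| := by
      rw [show a - (a - tt a * h) = tt a * h by ring, abs_mul, abs_of_pos h0]
    rw [this]
    nlinarith [abs_nonneg h]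
  -- measure bound
  have hmeas : volume E ≤ ∑' b : ↥u, ENNReal.ofReal (8 * ((2 + |h|) * tt b)) := by
    refine le_trans (measure_mono hEcov) ?_
    refine le_trans (measure_biUnion_le volume hucnt _) ?_
    refine ENNReal.tsum_le_tsum fun b => ?_
    rw [Real.volume_closedBall]
    exact ENNReal.ofReal_le_ofReal (by ring_nf; nlinarith [(htt _ (huE b.2)).1, abs_nonneg h])
  -- sum of small integrals
  have hsum : ∑' b : ↥u, (L * ENNReal.ofReal (tt b)) ≤ I := by
    have hsub : ∀ b : ↥u, ball ((b:ℝ) - tt b * h) (2 * tt b)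
        ⊆ closedBall ((b:ℝ) - tt b * h) ((2 + |h|) * tt b) := by
      intro b
      refine ball_subset_closedBall.trans (closedBall_subset_closedBall ?_)
      nlinarith [(htt _ (huE b.2)).1, abs_nonneg h]
    calc ∑' b : ↥u, (L * ENNReal.ofReal (tt b))
        ≤ ∑' b : ↥u, ∫⁻ v in ball ((b:ℝ) - tt b * h) (2 * tt b), ENNReal.ofReal |f v| :=
          ENNReal.tsum_le_tsum fun b => (htt _ (huE b.2)).2.le
      _ = ∫⁻ v in ⋃ b : ↥u, ball ((b:ℝ) - tt b * h) (2 * tt b), ENNReal.ofReal |f v| := by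
          rw [lintegral_iUnion (fun b => measurableSet_ball)
            (fun i j hij => ((hdisj i.2 j.2 (Subtype.coe_injective.ne hij)).mono
              (hsub i) (hsub j)))]
      _ ≤ I := setLIntegral_le_lintegral _ _
  -- combine
  calc volume E * L
      ≤ (∑' b : ↥u, ENNReal.ofReal (8 * ((2 + |h|) * tt b))) * L :=
        mul_le_mul_left hmeas L
    _ = ∑' b : ↥u, ENNReal.ofReal (8 * (2 + |h|)) * (L * ENNReal.ofReal (tt b)) := by
        rw [← ENNReal.tsum_mul_right]
        refine tsum_congr fun b => ?_
        rw [show (8:ℝ) * ((2 + |h|) * tt b) = (8 * (2 + |h|)) * tt b by ring,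
          ENNReal.ofReal_mul (by positivity)]
        ring
    _ = ENNReal.ofReal (8 * (2 + |h|)) * ∑' b : ↥u, (L * ENNReal.ofReal (tt b)) :=
        ENNReal.tsum_mul_left
    _ ≤ ENNReal.ofReal (8 * (2 + |h|)) * I := mul_le_mul_right hsum _
    _ ≤ ENNReal.ofReal (20 * (1 + |h|)) * I := by
        refine mul_le_mul_left (ENNReal.ofReal_le_ofReal ?_) _
        nlinarith [abs_nonneg h]

lemma lint_rpow_Ioo {P : ℝ} (hP : 0 < P) {a : ℝ} (ha : 0 ≤ a) :
    ∫⁻ t in Ioo (0:ℝ) a, ENNReal.ofReal (P * t ^ (P - 1)) = ENNReal.ofReal (a ^ P) := by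
  have hint : IntervalIntegrable (fun t : ℝ => P * t ^ (P - 1)) volume 0 a :=
    (intervalIntegral.intervalIntegrable_rpow' (by linarith)).const_mul P
  have hInt : IntegrableOn (fun t : ℝ => P * t ^ (P - 1)) (Ioo 0 a) volume := by
    refine (IntegrableOn.mono_set ?_ Ioo_subset_Ioc_self)
    have := (intervalIntegrable_iff_integrableOn_Ioc_of_le ha).1 hint
    exact this
  rw [← ofReal_integral_eq_lintegral_ofReal hInt ?nn]
  case nn =>
    filter_upwards [ae_restrict_mem measurableSet_Ioo] with t ht
    have : (0:ℝ) ≤ t ^ (P-1) := Real.rpow_nonneg ht.1.le _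
    exact mul_nonneg (by linarith) this
  congr 1
  rw [← integral_Ioc_eq_integral_Ioo, ← intervalIntegral.integral_of_le ha]
  rw [intervalIntegral.integral_const_mul, integral_rpow (Or.inl (by linarith))]
  rw [Real.zero_rpow (by linarith : P - 1 + 1 ≠ 0)]
  rw [sub_add_cancel, sub_zero]
  field_simp

lemma lint_rpow_Ioi_top {P : ℝ} (hP : 1 < P) :
    ∫⁻ t in Ioi (0:ℝ), ENNReal.ofReal (P * t ^ (P - 1)) = ∞ := by
  set J := ∫⁻ t in Ioi (0:ℝ), ENNReal.ofReal (P * t ^ (P - 1)) with hJ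
  refine ENNReal.eq_top_of_forall_nnreal_le fun r => ?_
  obtain ⟨n, hn⟩ := exists_nat_ge (r : ℝ)
  have h1 : ENNReal.ofReal ((n:ℝ) ^ P) ≤ J := by
    rw [← lint_rpow_Ioo (zero_lt_one.trans hP) (Nat.cast_nonneg n)]
    exact lintegral_mono_set Ioo_subset_Ioi_self
  refine le_trans ?_ h1
  rw [← ENNReal.ofReal_coe_nnreal]
  refine ENNReal.ofReal_le_ofReal (hn.trans ?_)
  rcases Nat.eq_zero_or_pos n with rfl | hn0
  · norm_num [Real.zero_rpow (show P ≠ 0 by linarith)]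
  · calc (n:ℝ) = (n:ℝ) ^ (1:ℝ) := (Real.rpow_one _).symm
      _ ≤ (n:ℝ) ^ P := Real.rpow_le_rpow_of_exponent_le
          (by exact_mod_cast hn0) hP.le

lemma pointwise_rpow (P : ℝ) (hP : 1 < P) (c : ℝ≥0∞) :
    c ^ P = ∫⁻ t in Ioi (0:ℝ),
      {t : ℝ | ENNReal.ofReal t < c}.indicator (fun t => ENNReal.ofReal (P * t ^ (P - 1))) t := by
  have hSm : MeasurableSet {t : ℝ | ENNReal.ofReal t < c} :=
    measurableSet_lt (by fun_prop) measurable_const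
  rw [lintegral_indicator hSm, Measure.restrict_restrict hSm]
  rcases eq_or_ne c ∞ with rfl | hc
  · have : {t : ℝ | ENNReal.ofReal t < ∞} = univ := by
      ext t; simp [ENNReal.ofReal_lt_top]
    rw [this, univ_inter, lint_rpow_Ioi_top hP, ENNReal.top_rpow_of_pos (by linarith)]
  · have hset : {t : ℝ | ENNReal.ofReal t < c} ∩ Ioi 0 = Ioo 0 c.toReal := by
      ext t
      simp only [mem_inter_iff, mem_setOf_eq, mem_Ioi, mem_Ioo]
      constructor
      · rintro ⟨h1, h2⟩
        exact ⟨h2, (ENNReal.ofReal_lt_iff_lt_toReal h2.le hc).1 h1⟩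
      · rintro ⟨h1, h2⟩
        exact ⟨(ENNReal.ofReal_lt_iff_lt_toReal h1.le hc).2 h2, h1⟩
    rw [hset, lint_rpow_Ioo (zero_lt_one.trans hP) ENNReal.toReal_nonneg,
      ← ENNReal.ofReal_rpow_of_nonneg ENNReal.toReal_nonneg (by linarith),
      ENNReal.ofReal_toReal hc]

lemma layercake {F : ℝ → ℝ≥0∞} (hF : Measurable F) {P : ℝ} (hP : 1 < P) :
    ∫⁻ x, F x ^ P = ∫⁻ t in Ioi (0:ℝ),
      ENNReal.ofReal (P * t ^ (P - 1)) * volume {x | ENNReal.ofReal t < F x} := by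
  have h1 : ∀ x, F x ^ P = ∫⁻ t in Ioi (0:ℝ),
      {t : ℝ | ENNReal.ofReal t < F x}.indicator
        (fun t => ENNReal.ofReal (P * t ^ (P - 1))) t := fun x => pointwise_rpow P hP (F x)
  calc ∫⁻ x, F x ^ P
      = ∫⁻ x, ∫⁻ t in Ioi (0:ℝ), {t : ℝ | ENNReal.ofReal t < F x}.indicator
          (fun t => ENNReal.ofReal (P * t ^ (P - 1))) t := by
        exact lintegral_congr h1
    _ = ∫⁻ t in Ioi (0:ℝ), ∫⁻ x, {t : ℝ | ENNReal.ofReal t < F x}.indicator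
          (fun t => ENNReal.ofReal (P * t ^ (P - 1))) t := by
        refine lintegral_lintegral_swap ?_
        have hA : MeasurableSet {p : ℝ × ℝ | ENNReal.ofReal p.2 < F p.1} := by
          refine measurableSet_lt (by fun_prop) (by fun_prop)
        have : (Function.uncurry fun x t =>
            {t : ℝ | ENNReal.ofReal t < F x}.indicator
              (fun t => ENNReal.ofReal (P * t ^ (P - 1))) t)
            = {p : ℝ × ℝ | ENNReal.ofReal p.2 < F p.1}.indicator
              (fun p => ENNReal.ofReal (P * p.2 ^ (P - 1))) := by
          ext p
          simp only [indicator_apply, Set.mem_setOf_eq]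
          rfl
        rw [this]
        exact (Measurable.indicator (by fun_prop) hA).aemeasurable
    _ = ∫⁻ t in Ioi (0:ℝ), ENNReal.ofReal (P * t ^ (P - 1))
          * volume {x | ENNReal.ofReal t < F x} := by
        refine setLIntegral_congr_fun measurableSet_Ioi (fun t _ => ?_)
        have : (fun x => {t : ℝ | ENNReal.ofReal t < F x}.indicator
            (fun t => ENNReal.ofReal (P * t ^ (P - 1))) t)
            = fun x => {x : ℝ | ENNReal.ofReal t < F x}.indicator
              (fun _ => ENNReal.ofReal (P * t ^ (P - 1))) x := by
          ext x
          by_cases hx : ENNReal.ofReal t < F x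
          · rw [indicator_of_mem (by exact hx), indicator_of_mem (by exact hx)]
          · rw [indicator_of_notMem (by exact hx), indicator_of_notMem (by exact hx)]
        rw [this, lintegral_indicator_const (measurableSet_lt measurable_const hF)]

lemma core {P : ℝ} (hP : 1 < P) {f : ℝ → ℝ} (hf : Measurable f) (h : ℝ) :
    ∫⁻ x, (MhStar h f x) ^ P ≤
      ENNReal.ofReal (1 + |h|) * ENNReal.ofReal (20 * (2 * P / (P - 1)) * 8 ^ (P - 1))
        * ∫⁻ u, ENNReal.ofReal |f u| ^ P := by
  have hK : ENNReal.ofReal (20 * (1 + |h|)) ≠ ∞ := ENNReal.ofReal_ne_top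
  set K := ENNReal.ofReal (20 * (1 + |h|)) with hKdef
  set B : ℝ → ℝ≥0∞ := fun t =>
    ∫⁻ u, {u : ℝ | t/8 < |f u|}.indicator (fun u => ENNReal.ofReal |f u|) u with hBdef
  -- Step 2 : distribution bound
  have claim1 : ∀ t : ℝ, 0 < t →
      volume {x | ENNReal.ofReal t < MhStar h f x} ≤ K * B t / ENNReal.ofReal (t/2) := by
    intro t ht
    set c : ℝ := t/8 with hcdef
    set g : ℝ → ℝ := fun u => min |f u| c with hgdef
    set b : ℝ → ℝ := fun u => |f u| - min |f u| c with hbdef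
    have hc0 : 0 ≤ c := by positivity
    have hgnn : ∀ u, 0 ≤ g u := fun u => le_min (abs_nonneg _) hc0
    have hbnn : ∀ u, 0 ≤ b u := fun u => sub_nonneg.2 (min_le_left _ _)
    have habs : ∀ u, |f u| = |g u| + |b u| := by
      intro u
      rw [abs_of_nonneg (hgnn u), abs_of_nonneg (hbnn u)]
      simp [hgdef, hbdef]
    have hb_meas : Measurable b := by
      have : Measurable fun u => |f u| := hf.abs
      fun_prop
    have hg_meas : Measurable g := by fun_prop
    have hgle : ∀ u, |g u| ≤ c := fun u => by
      rw [abs_of_nonneg (hgnn u)]; exact min_le_right _ _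
    have hsubset : {x | ENNReal.ofReal t < MhStar h f x}
        ⊆ {x | ENNReal.ofReal (t/2) < MhStar h b x} := by
      intro x hx
      by_contra hbx
      simp only [mem_setOf_eq, not_lt] at hbx
      have h1 : MhStar h f x ≤ ENNReal.ofReal t := by
        calc MhStar h f x ≤ MhStar h g x + MhStar h b x := MhStar_le_add hg_meas habs x
          _ ≤ ENNReal.ofReal (4 * c) + ENNReal.ofReal (t/2) :=
            add_le_add (MhStar_le_const hgle x) hbx
          _ = ENNReal.ofReal t := by
            rw [← ENNReal.ofReal_add (by positivity) (by positivity)]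
            congr 1
            rw [hcdef]; ring
      exact absurd hx (not_lt.2 (by exact_mod_cast h1))
    have hwk := weak_type hb_meas h (L := ENNReal.ofReal (t/2))
      (by exact (ENNReal.ofReal_pos.2 (by linarith)).ne') ENNReal.ofReal_ne_top
    have hbB : (∫⁻ u, ENNReal.ofReal |b u|) ≤ B t := by
      refine lintegral_mono fun u => ?_
      by_cases hu : t/8 < |f u|
      · rw [indicator_of_mem (by exact hu)]
        refine ENNReal.ofReal_le_ofReal ?_
        rw [abs_of_nonneg (hbnn u)]
        have := hgnn u
        simp only [hbdef]
        have : 0 ≤ min |f u| c := hgnn u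
        linarith
      · have : b u = 0 := by
          simp only [hbdef, sub_eq_zero]
          rw [min_eq_left (by rw [hcdef]; linarith)]
        rw [this, indicator_of_notMem (by exact hu)]
        simp
    calc volume {x | ENNReal.ofReal t < MhStar h f x}
        ≤ volume {x | ENNReal.ofReal (t/2) < MhStar h b x} := measure_mono hsubset
      _ ≤ K * B t / ENNReal.ofReal (t/2) := by
          rw [ENNReal.le_div_iff_mul_le
            (Or.inl (by exact (ENNReal.ofReal_pos.2 (by linarith)).ne'))
            (Or.inl ENNReal.ofReal_ne_top)]
          exact hwk.trans (mul_le_mul_right hbB _)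
  -- Step 3-4 : plug into layercake and simplify integrand
  have step3 : ∫⁻ x, (MhStar h f x) ^ P ≤
      ∫⁻ t in Ioi (0:ℝ), K * (ENNReal.ofReal (2 * P * t ^ (P - 2)) * B t) := by
    rw [layercake (MhStar_measurable hf h) hP]
    refine lintegral_mono_ae ?_
    filter_upwards [ae_restrict_mem measurableSet_Ioi] with t ht
    replace ht : (0:ℝ) < t := ht
    calc ENNReal.ofReal (P * t ^ (P-1)) * volume {x | ENNReal.ofReal t < MhStar h f x}
        ≤ ENNReal.ofReal (P * t ^ (P-1)) * (K * B t / ENNReal.ofReal (t/2)) :=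
          mul_le_mul_right (claim1 t ht) _
      _ = K * (ENNReal.ofReal (2 * P * t ^ (P - 2)) * B t) := by
          rw [div_eq_mul_inv, ← ENNReal.ofReal_inv_of_pos (by linarith)]
          rw [show ENNReal.ofReal (P * t^(P-1)) * (K * B t * ENNReal.ofReal (t/2)⁻¹)
            = K * ((ENNReal.ofReal (P * t^(P-1)) * ENNReal.ofReal (t/2)⁻¹) * B t) by ring]
          congr 2
          rw [← ENNReal.ofReal_mul (by positivity)]
          congr 1
          have ht2 : t ^ (P-2) = t ^ (P-1) / t := by
            rw [show P - 2 = (P-1) - 1 by ring, Real.rpow_sub ht, Real.rpow_one]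
          rw [ht2]
          field_simp
  -- Step 5-6 : pull K out, push constant into B
  have step5 : ∫⁻ t in Ioi (0:ℝ), K * (ENNReal.ofReal (2 * P * t ^ (P - 2)) * B t)
      = K * ∫⁻ t in Ioi (0:ℝ),
          ∫⁻ u, ENNReal.ofReal (2 * P * t ^ (P - 2))
            * {u : ℝ | t/8 < |f u|}.indicator (fun u => ENNReal.ofReal |f u|) u := by
    rw [lintegral_const_mul' K _ hK]
    congr 1
    refine lintegral_congr fun t => ?_
    rw [hBdef, ← lintegral_const_mul' _ _ ENNReal.ofReal_ne_top]
  -- Step 7 : swap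
  have step7 : (∫⁻ t in Ioi (0:ℝ),
        ∫⁻ u, ENNReal.ofReal (2 * P * t ^ (P - 2))
          * {u : ℝ | t/8 < |f u|}.indicator (fun u => ENNReal.ofReal |f u|) u)
      = ∫⁻ u, ∫⁻ t in Ioi (0:ℝ), ENNReal.ofReal (2 * P * t ^ (P - 2))
          * {u : ℝ | t/8 < |f u|}.indicator (fun u => ENNReal.ofReal |f u|) u := by
    refine lintegral_lintegral_swap ?_
    have hA : MeasurableSet {p : ℝ × ℝ | p.1/8 < |f p.2|} := by
      refine measurableSet_lt (by fun_prop) ?_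
      exact (hf.comp measurable_snd).abs
    have heq : (Function.uncurry fun t u => ENNReal.ofReal (2 * P * t ^ (P - 2))
        * {u : ℝ | t/8 < |f u|}.indicator (fun u => ENNReal.ofReal |f u|) u)
        = fun p : ℝ × ℝ => ENNReal.ofReal (2 * P * p.1 ^ (P - 2))
          * {p : ℝ × ℝ | p.1/8 < |f p.2|}.indicator (fun p => ENNReal.ofReal |f p.2|) p := by
      ext ⟨t, u⟩
      simp only [Function.uncurry_apply_pair, indicator_apply, mem_setOf_eq]
    rw [heq]
    refine (Measurable.mul ?_ ?_).aemeasurable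
    · refine ENNReal.measurable_ofReal.comp ?_
      have h1 : Measurable fun p : ℝ × ℝ => p.1 ^ (P - 2) := by fun_prop
      fun_prop
    · exact Measurable.indicator (by fun_prop) hA
  -- Step 8 : inner integral
  have hP1 : (0:ℝ) < P - 1 := by linarith
  have inner : ∀ u : ℝ, (∫⁻ t in Ioi (0:ℝ), ENNReal.ofReal (2 * P * t ^ (P - 2))
        * {u' : ℝ | t/8 < |f u'|}.indicator (fun u' => ENNReal.ofReal |f u'|) u)
      = ENNReal.ofReal (2 * P / (P - 1)) * ENNReal.ofReal ((8 * |f u|) ^ (P - 1))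
          * ENNReal.ofReal |f u| := by
    intro u
    set a : ℝ := 8 * |f u| with hadef
    have hfun : (fun t => ENNReal.ofReal (2 * P * t ^ (P - 2))
        * {u' : ℝ | t/8 < |f u'|}.indicator (fun u' => ENNReal.ofReal |f u'|) u)
        = fun t => (Iio a).indicator
            (fun t => ENNReal.ofReal (2 * P * t ^ (P - 2)) * ENNReal.ofReal |f u|) t := by
      ext t
      have hiff : (u ∈ {u' : ℝ | t/8 < |f u'|}) = (t ∈ Iio a) := by
        simp only [mem_setOf_eq, mem_Iio, hadef]
        exact propext ⟨fun hh => by linarith, fun hh => by linarith⟩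
      by_cases hmem : t ∈ Iio a
      · rw [indicator_of_mem hmem, indicator_of_mem (show u ∈ _ from hiff ▸ hmem)]
      · rw [indicator_of_notMem hmem, indicator_of_notMem (show u ∉ _ from hiff ▸ hmem),
          mul_zero]
    rw [hfun, lintegral_indicator measurableSet_Iio, Measure.restrict_restrict measurableSet_Iio,
      Set.Iio_inter_Ioi, lintegral_mul_const' _ _ ENNReal.ofReal_ne_top]
    congr 1
    have hrw : ∀ t : ℝ, 2 * P * t ^ (P - 2)
        = (2 * P / (P - 1)) * ((P - 1) * t ^ ((P - 1) - 1)) := by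
      intro t
      rw [show P - 2 = (P - 1) - 1 by ring]
      field_simp
    calc ∫⁻ t in Ioo (0:ℝ) a, ENNReal.ofReal (2 * P * t ^ (P - 2))
        = ∫⁻ t in Ioo (0:ℝ) a, ENNReal.ofReal (2 * P / (P - 1))
            * ENNReal.ofReal ((P - 1) * t ^ ((P - 1) - 1)) := by
          refine lintegral_congr fun t => ?_
          rw [← ENNReal.ofReal_mul (by positivity), ← hrw]
      _ = ENNReal.ofReal (2 * P / (P - 1)) * ENNReal.ofReal (a ^ (P - 1)) := by
          rw [lintegral_const_mul' _ _ ENNReal.ofReal_ne_top,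
            lint_rpow_Ioo hP1 (by positivity)]
  -- Step 9 : compute the u-integral
  have step9 : (∫⁻ u, ENNReal.ofReal (2 * P / (P - 1)) * ENNReal.ofReal ((8 * |f u|) ^ (P - 1))
        * ENNReal.ofReal |f u|)
      = ENNReal.ofReal ((2 * P / (P - 1)) * 8 ^ (P - 1))
          * ∫⁻ u, ENNReal.ofReal |f u| ^ P := by
    rw [← lintegral_const_mul' _ _ ENNReal.ofReal_ne_top]
    refine lintegral_congr fun u => ?_
    rw [ENNReal.ofReal_rpow_of_nonneg (abs_nonneg _) (by linarith : (0:ℝ) ≤ P)]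
    rw [← ENNReal.ofReal_mul (by positivity), ← ENNReal.ofReal_mul (by positivity),
      ← ENNReal.ofReal_mul (by positivity)]
    congr 1
    rw [Real.mul_rpow (by norm_num) (abs_nonneg _),
      show P = (P - 1) + 1 by ring, Real.rpow_add' (abs_nonneg _) (by linarith),
      Real.rpow_one]
    ring_nf
  calc ∫⁻ x, (MhStar h f x) ^ P
      ≤ ∫⁻ t in Ioi (0:ℝ), K * (ENNReal.ofReal (2 * P * t ^ (P - 2)) * B t) := step3
    _ = K * ∫⁻ t in Ioi (0:ℝ),
          ∫⁻ u, ENNReal.ofReal (2 * P * t ^ (P - 2))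
            * {u : ℝ | t/8 < |f u|}.indicator (fun u => ENNReal.ofReal |f u|) u := step5
    _ = K * ∫⁻ u, ENNReal.ofReal (2 * P / (P - 1)) * ENNReal.ofReal ((8 * |f u|) ^ (P - 1))
          * ENNReal.ofReal |f u| := by
        rw [step7]
        congr 1
        exact lintegral_congr fun u => inner u
    _ = K * (ENNReal.ofReal ((2 * P / (P - 1)) * 8 ^ (P - 1))
          * ∫⁻ u, ENNReal.ofReal |f u| ^ P) := by rw [step9]
    _ = ENNReal.ofReal (1 + |h|) * ENNReal.ofReal (20 * (2 * P / (P - 1)) * 8 ^ (P - 1))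
          * ∫⁻ u, ENNReal.ofReal |f u| ^ P := by
        rw [hKdef, ← mul_assoc, ← ENNReal.ofReal_mul (by positivity),
          ← ENNReal.ofReal_mul (by positivity)]
        congr 2
        ring

/-- Lemma 3.2: `‖M_h^* f‖_{L^p} ≤ C (1+|h|)^{1/p} ‖f‖_{L^p}` for `1 < p ≤ ∞`,
with `C` independent of `h`. -/
theorem MhStar_Lp_bound (p : ℝ≥0∞) (hp : 1 < p) :
    ∃ C : ℝ≥0, ∀ (h : ℝ) (f : ℝ → ℝ), MemLp f p volume →
      lpNormE volume (MhStar h f) p ≤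
        (C : ℝ≥0∞) * ENNReal.ofReal ((1 + |h|) ^ (1 / p).toReal) * eLpNorm f p volume := by
  rcases eq_or_ne p ∞ with rfl | hptop
  · refine ⟨4, fun h f _ => ?_⟩
    have h1 : lpNormE volume (MhStar h f) ∞ = essSup (MhStar h f) volume := by
      unfold lpNormE
      rw [if_neg (by simp), if_pos rfl]
    have h2 : (1 / (∞:ℝ≥0∞)).toReal = 0 := by simp
    rw [h1, h2, Real.rpow_zero, ENNReal.ofReal_one, mul_one]
    have h3 : essSup (MhStar h f) volume ≤ ENNReal.ofReal 4 * eLpNorm f ∞ volume :=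
      essSup_le_of_ae_le _ (ae_of_all _ (MhStar_le_eLpNormTop h f))
    refine h3.trans (le_of_eq ?_)
    congr 1
    rw [show ((4:ℝ≥0):ℝ≥0∞) = ENNReal.ofReal 4 by
      simp [ENNReal.ofReal]]
  · have hp0 : p ≠ 0 := by positivity
    set P : ℝ := p.toReal with hPdef
    have hP : 1 < P := by
      rw [hPdef, ← ENNReal.toReal_one]
      exact (ENNReal.toReal_lt_toReal (by simp) hptop).2 hp
    set D : ℝ := 20 * (2 * P / (P - 1)) * 8 ^ (P - 1) with hDdef
    have hD : 0 ≤ D := by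
      have h1 : (0:ℝ) ≤ 2 * P / (P - 1) := by
        apply div_nonneg <;> linarith
      have h2 : (0:ℝ) ≤ (8:ℝ) ^ (P - 1) := Real.rpow_nonneg (by norm_num) _
      positivity
    refine ⟨(D ^ (1/P)).toNNReal, fun h f hmem => ?_⟩
    -- replace f by a measurable representative
    have hsm := hmem.aestronglyMeasurable
    set f' : ℝ → ℝ := hsm.mk f with hf'def
    have hf' : Measurable f' := hsm.stronglyMeasurable_mk.measurable
    have hae : f =ᵐ[volume] f' := hsm.ae_eq_mk
    rw [MhStar_congr_ae hae h, eLpNorm_congr_ae hae]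
    have hlp : lpNormE volume (MhStar h f') p
        = (∫⁻ x, (MhStar h f' x) ^ P) ^ (1/P) := by
      unfold lpNormE
      rw [if_neg hp0, if_neg hptop]
    rw [hlp]
    have hcore := core hP hf' h
    have hmono : (∫⁻ x, (MhStar h f' x) ^ P) ^ (1/P)
        ≤ (ENNReal.ofReal (1 + |h|) * ENNReal.ofReal D
            * ∫⁻ u, ENNReal.ofReal |f' u| ^ P) ^ (1/P) :=
      ENNReal.rpow_le_rpow hcore (by positivity)
    refine hmono.trans (le_of_eq ?_)
    have hsplit : (ENNReal.ofReal (1 + |h|) * ENNReal.ofReal D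
          * ∫⁻ u, ENNReal.ofReal |f' u| ^ P) ^ (1/P)
        = (ENNReal.ofReal (1 + |h|)) ^ (1/P) * (ENNReal.ofReal D) ^ (1/P)
          * (∫⁻ u, ENNReal.ofReal |f' u| ^ P) ^ (1/P) := by
      rw [ENNReal.mul_rpow_of_nonneg _ _ (by positivity),
        ENNReal.mul_rpow_of_nonneg _ _ (by positivity)]
    rw [hsplit]
    have e1 : (ENNReal.ofReal (1 + |h|)) ^ (1/P)
        = ENNReal.ofReal ((1 + |h|) ^ (1/p).toReal) := by
      rw [ENNReal.ofReal_rpow_of_nonneg (by positivity) (by positivity)]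
      congr 1
      rw [ENNReal.toReal_div, ENNReal.toReal_one]
    have e2 : (ENNReal.ofReal D) ^ (1/P) = ((D ^ (1/P)).toNNReal : ℝ≥0∞) := by
      rw [ENNReal.ofReal_rpow_of_nonneg hD (by positivity)]
      rfl
    have e3 : (∫⁻ u, ENNReal.ofReal |f' u| ^ P) ^ (1/P) = eLpNorm f' p volume := by
      rw [eLpNorm_eq_lintegral_rpow_enorm_toReal hp0 hptop]
      congr 1
      refine lintegral_congr fun u => ?_
      rw [← Real.enorm_eq_ofReal_abs]
    rw [e1, e2, e3]
    ring
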